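/- For every k with 1 ≤ k ≤ L(m,n), there exists a match (i,j) with L(i,j) = k; that is, every rank from 1 up to the LCS length of A and B is realized by at least one match (every contour is nonempty). -/

import Mathlib

/-- `s` is a common subsequence of `A` and `B`. -/
def IsCommonSubseq {α : Type*} (A B s : List α) : Prop :=
  s.Sublist A ∧ s.Sublist B

/-- `lcsL A B i j` is the maximum length of a common subsequence of the
length-`i` prefix of `A` and the length-`j` prefix of `B`. -/
noncomputable def lcsL {α : Type*} (A B : List α) (i j : ℕ) : ℕ :=
  sSup {k | ∃ s : List α, IsCommonSubseq (A.take i) (B.take j) s ∧ s.length = k}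

/-- `s` is a longest common subsequence of the length-`i` prefix of `A` and
the length-`j` prefix of `B`. -/
def IsLCS {α : Type*} (A B : List α) (i j : ℕ) (s : List α) : Prop :=
  IsCommonSubseq (A.take i) (B.take j) s ∧ s.length = lcsL A B i j

/-- The (1-indexed) pair `(i, j)` is a match: `a_i = b_j`. -/
def IsMatch {α : Type*} (A B : List α) (i j : ℕ) : Prop :=
  1 ≤ i ∧ i ≤ A.length ∧ 1 ≤ j ∧ j ≤ B.length ∧ A[i - 1]? = B[j - 1]?

/-- `e` is an embedding of the list `s` in the pair of prefixes `(A_i, B_j)`: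
a sequence of (1-indexed) position pairs, strictly increasing in both
coordinates, lying in `[1..i] × [1..j]`, such that the `t`-th pair points at
occurrences of the `t`-th character of `s` in both strings. -/
def IsEmbedding {α : Type*} (A B : List α) (i j : ℕ) (s : List α)
    (e : List (ℕ × ℕ)) : Prop :=
  e.Chain' (fun u v => u.1 < v.1 ∧ u.2 < v.2) ∧
  (∀ u ∈ e, 1 ≤ u.1 ∧ u.1 ≤ i ∧ 1 ≤ u.2 ∧ u.2 ≤ j) ∧
  List.Forall₂ (fun (u : ℕ × ℕ) (c : α) =>
    A[u.1 - 1]? = some c ∧ B[u.2 - 1]? = some c) e s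

/-- The match `(i, j)` is antidominant of rank `r` within the rectangle
`[1..I] × [1..J]`. -/
def IsAntidominant {α : Type*} (A B : List α) (r I J i j : ℕ) : Prop :=
  IsMatch A B i j ∧ i ≤ I ∧ j ≤ J ∧ lcsL A B i j = r ∧
  ¬ ∃ i' j', IsMatch A B i' j' ∧ lcsL A B i' j' = r ∧
    ((i' = i ∧ j < j' ∧ j' ≤ J) ∨ (j' = j ∧ i < i' ∧ i' ≤ I))

/-- `e` is an antidominant backtrace for `(i, j)`: a sequence of matches of
length `L(i,j)`, strictly increasing in both coordinates, such that (setting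
the `(k+1)`-st entry to `(i+1, j+1)`) the `t`-th match is antidominant of rank
`t` within the rectangle determined by the `(t+1)`-st entry minus one. -/
def IsAntidominantBacktrace {α : Type*} (A B : List α) (i j : ℕ)
    (e : List (ℕ × ℕ)) : Prop :=
  e.length = lcsL A B i j ∧
  e.Chain' (fun u v => u.1 < v.1 ∧ u.2 < v.2) ∧
  ∀ t < e.length,
    IsAntidominant A B (t + 1)
      (((e ++ [(i + 1, j + 1)]).getD (t + 1) (0, 0)).1 - 1)
      (((e ++ [(i + 1, j + 1)]).getD (t + 1) (0, 0)).2 - 1)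
      (e.getD t (0, 0)).1 (e.getD t (0, 0)).2

section Helpers

variable {α : Type*}

lemma lcs_bdd (A B : List α) (i j : ℕ) :
    BddAbove {k | ∃ s : List α, IsCommonSubseq (A.take i) (B.take j) s ∧ s.length = k} :=
  ⟨(A.take i).length, fun _ ⟨s, hs, hl⟩ => hl ▸ hs.1.length_le⟩

lemma lcs_nonempty (A B : List α) (i j : ℕ) :
    {k | ∃ s : List α, IsCommonSubseq (A.take i) (B.take j) s ∧ s.length = k}.Nonempty :=
  ⟨0, [], ⟨List.nil_sublist _, List.nil_sublist _⟩, rfl⟩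

lemma exists_lcs (A B : List α) (i j : ℕ) :
    ∃ s : List α, IsCommonSubseq (A.take i) (B.take j) s ∧ s.length = lcsL A B i j :=
  Nat.sSup_mem (lcs_nonempty A B i j) (lcs_bdd A B i j)

lemma le_lcsL {A B s : List α} {i j : ℕ} (h : IsCommonSubseq (A.take i) (B.take j) s) :
    s.length ≤ lcsL A B i j :=
  le_csSup (lcs_bdd A B i j) ⟨s, h, rfl⟩

lemma take_sublist_take (l : List α) {j j' : ℕ} (h : j ≤ j') :
    (l.take j).Sublist (l.take j') := by
  have : l.take j = (l.take j').take j := by rw [List.take_take, Nat.min_eq_left h]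
  rw [this]; exact List.take_sublist _ _

lemma lcsL_mono_right (A B : List α) (i : ℕ) {j j' : ℕ} (h : j ≤ j') :
    lcsL A B i j ≤ lcsL A B i j' := by
  obtain ⟨s, ⟨hsA, hsB⟩, hlen⟩ := exists_lcs A B i j
  exact hlen ▸ le_lcsL ⟨hsA, hsB.trans (take_sublist_take B h)⟩

lemma lcsL_mono_left (A B : List α) {i i' : ℕ} (j : ℕ) (h : i ≤ i') :
    lcsL A B i j ≤ lcsL A B i' j := by
  obtain ⟨s, ⟨hsA, hsB⟩, hlen⟩ := exists_lcs A B i j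
  exact hlen ▸ le_lcsL ⟨hsA.trans (take_sublist_take A h), hsB⟩

lemma lcsL_zero_right (A B : List α) (i : ℕ) : lcsL A B i 0 = 0 := by
  refine Nat.le_antisymm (csSup_le (lcs_nonempty A B i 0) ?_) (Nat.zero_le _)
  rintro k ⟨s, ⟨_, hsB⟩, hlen⟩
  simp only [List.take_zero, List.sublist_nil] at hsB
  simp [← hlen, hsB]

lemma lcsL_succ_right_le (A B : List α) (i j : ℕ) :
    lcsL A B i (j + 1) ≤ lcsL A B i j + 1 := by
  obtain ⟨s, ⟨hsA, hsB⟩, hlen⟩ := exists_lcs A B i (j + 1)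
  rw [List.take_succ, List.sublist_append_iff] at hsB
  obtain ⟨l₁, l₂, rfl, h₁, h₂⟩ := hsB
  have hl₂ : l₂.length ≤ 1 := h₂.length_le.trans (by cases h : B[j]? <;> simp [h])
  have h1cs : IsCommonSubseq (A.take i) (B.take j) l₁ :=
    ⟨(List.sublist_append_left l₁ l₂).trans hsA, h₁⟩
  have := le_lcsL h1cs
  rw [← hlen]; simp only [List.length_append]; omega

lemma lcsL_succ_left_le (A B : List α) (i j : ℕ) :
    lcsL A B (i + 1) j ≤ lcsL A B i j + 1 := by
  obtain ⟨s, ⟨hsA, hsB⟩, hlen⟩ := exists_lcs A B (i + 1) j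
  rw [List.take_succ, List.sublist_append_iff] at hsA
  obtain ⟨l₁, l₂, rfl, h₁, h₂⟩ := hsA
  have hl₂ : l₂.length ≤ 1 := h₂.length_le.trans (by cases h : A[i]? <;> simp [h])
  have h1cs : IsCommonSubseq (A.take i) (B.take j) l₁ :=
    ⟨h₁, (List.sublist_append_left l₁ l₂).trans hsB⟩
  have := le_lcsL h1cs
  rw [← hlen]; simp only [List.length_append]; omega

lemma lcs_key (A B : List α) (i j : ℕ)
    (h1 : lcsL A B i (j + 1) < lcsL A B (i + 1) (j + 1))
    (h2 : lcsL A B (i + 1) j < lcsL A B (i + 1) (j + 1)) :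
    i < A.length ∧ j < B.length ∧ A[i]? = B[j]? := by
  have hiA : i < A.length := by
    by_contra h
    push_neg at h
    have : A.take (i + 1) = A.take i := by
      rw [List.take_of_length_le h, List.take_of_length_le (h.trans i.le_succ)]
    simp only [lcsL, this] at h1
    omega
  have hjB : j < B.length := by
    by_contra h
    push_neg at h
    have : B.take (j + 1) = B.take j := by
      rw [List.take_of_length_le h, List.take_of_length_le (h.trans j.le_succ)]
    simp only [lcsL, this] at h2
    omega
  refine ⟨hiA, hjB, ?_⟩
  obtain ⟨s, ⟨hsA, hsB⟩, hlen⟩ := exists_lcs A B (i + 1) (j + 1)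
  -- A side
  have htA : A.take (i + 1) = A.take i ++ [A[i]] := by
    rw [List.take_succ]; simp [List.getElem?_eq_getElem hiA]
  have htB : B.take (j + 1) = B.take j ++ [B[j]] := by
    rw [List.take_succ]; simp [List.getElem?_eq_getElem hjB]
  have hlastA : s.getLast? = some A[i] := by
    rw [htA, List.sublist_append_iff] at hsA
    obtain ⟨l₁, l₂, rfl, hA₁, hA₂⟩ := hsA
    rcases List.sublist_singleton.mp hA₂ with rfl | rfl
    · exfalso
      have : IsCommonSubseq (A.take i) (B.take (j + 1)) (l₁ ++ []) := ⟨by simpa using hA₁, hsB⟩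
      have := le_lcsL this
      omega
    · exact List.getLast?_concat
  have hlastB : s.getLast? = some B[j] := by
    rw [htB, List.sublist_append_iff] at hsB
    obtain ⟨l₁, l₂, rfl, hB₁, hB₂⟩ := hsB
    rcases List.sublist_singleton.mp hB₂ with rfl | rfl
    · exfalso
      have : IsCommonSubseq (A.take (i + 1)) (B.take j) (l₁ ++ []) := ⟨hsA, by simpa using hB₁⟩
      have := le_lcsL this
      omega
    · exact List.getLast?_concat
  rw [List.getElem?_eq_getElem hiA, List.getElem?_eq_getElem hjB]
  rw [hlastA] at hlastB
  exact congrArg _ (Option.some.injEq _ _ ▸ hlastB)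

end Helpers

theorem stmt_17 {α : Type*} [DecidableEq α] (A B : List α) (m n : ℕ)
    (hA : A.length = m) (hB : B.length = n) (k : ℕ)
    (hk1 : 1 ≤ k) (hk2 : k ≤ lcsL A B m n) :
    ∃ i j, IsMatch A B i j ∧ lcsL A B i j = k := by
  classical
  -- find minimal i with k ≤ lcsL A B i n
  have hPm : k ≤ lcsL A B m n := hk2
  have hPex : ∃ i, k ≤ lcsL A B i n := ⟨m, hPm⟩
  have hi0spec : k ≤ lcsL A B (Nat.find hPex) n := Nat.find_spec hPex
  have hi0le : (Nat.find hPex) ≤ m := Nat.find_le hPm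
  have hi0pos : 0 < (Nat.find hPex) := by
    rcases Nat.eq_zero_or_pos (Nat.find hPex) with h | h
    · exfalso
      have := hi0spec
      rw [h] at this
      have h0 : lcsL A B 0 n = 0 := by
        refine Nat.le_antisymm (csSup_le (lcs_nonempty A B 0 n) ?_) (Nat.zero_le _)
        rintro c ⟨s, ⟨hsA, _⟩, hlen⟩
        simp only [List.take_zero, List.sublist_nil] at hsA
        simp [← hlen, hsA]
      omega
    · exact h
  obtain ⟨i, hi⟩ : ∃ i, (Nat.find hPex) = i + 1 := ⟨(Nat.find hPex) - 1, by omega⟩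
  rw [hi] at hi0spec hi0le
  have hiprev : ¬ k ≤ lcsL A B i n := Nat.find_min hPex (by omega)
  push_neg at hiprev
  have hstepA : lcsL A B (i + 1) n ≤ lcsL A B i n + 1 := lcsL_succ_left_le A B i n
  have hrowk : lcsL A B (i + 1) n = k := by omega
  -- find minimal j with k ≤ lcsL A B (i+1) j
  have hQex : ∃ j, k ≤ lcsL A B (i + 1) j := ⟨n, hrowk.ge⟩
  have hj0spec : k ≤ lcsL A B (i + 1) (Nat.find hQex) := Nat.find_spec hQex
  have hj0le : (Nat.find hQex) ≤ n := Nat.find_le hrowk.ge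
  have hj0pos : 0 < (Nat.find hQex) := by
    rcases Nat.eq_zero_or_pos (Nat.find hQex) with h | h
    · exfalso
      have := hj0spec
      rw [h, lcsL_zero_right] at this
      omega
    · exact h
  obtain ⟨j, hj⟩ : ∃ j, (Nat.find hQex) = j + 1 := ⟨(Nat.find hQex) - 1, by omega⟩
  rw [hj] at hj0spec hj0le
  have hjprev : ¬ k ≤ lcsL A B (i + 1) j := Nat.find_min hQex (by omega)
  push_neg at hjprev
  have hstepB : lcsL A B (i + 1) (j + 1) ≤ lcsL A B (i + 1) j + 1 := lcsL_succ_right_le A B (i + 1) j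
  have hcellk : lcsL A B (i + 1) (j + 1) = k := by
    have : lcsL A B (i + 1) (j + 1) ≤ lcsL A B (i + 1) n := lcsL_mono_right A B (i + 1) hj0le
    omega
  have h1 : lcsL A B i (j + 1) < lcsL A B (i + 1) (j + 1) := by
    have : lcsL A B i (j + 1) ≤ lcsL A B i n := lcsL_mono_right A B i hj0le
    omega
  have h2 : lcsL A B (i + 1) j < lcsL A B (i + 1) (j + 1) := by omega
  obtain ⟨hiA, hjB, heq⟩ := lcs_key A B i j h1 h2
  exact ⟨i + 1, j + 1, ⟨by omega, by omega, by omega, by omega, by simpa using heq⟩, hcellk⟩
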